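/- For the mixture Bernoulli process Q, the random Hilberg exponents satisfy γ⁺_Q = γ⁻_Q = 0 Q-almost surely. -/

import Mathlib

open MeasureTheory ProbabilityTheory Filter

noncomputable section

/-- The binary positive logarithm `log⁺ x`: `log(x+1)` for `x ≥ 0` and `0` for `x < 0`. -/
def logPlus (x : ℝ) : ℝ := if 0 ≤ x then Real.logb 2 (x + 1) else 0

variable {𝕏 : Type*}

/-- The left shift on two-sided sequences. -/
def shift (ω : ℤ → 𝕏) : ℤ → 𝕏 := fun i => ω (i + 1)

/-- The block `X_{-n+1}^0` of a two-sided sequence. -/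
def blockNeg (n : ℕ) (ω : ℤ → 𝕏) : Fin n → 𝕏 := fun i => ω (-(n : ℤ) + 1 + (i : ℕ))

/-- The block `X_1^n` of a two-sided sequence. -/
def blockPos (n : ℕ) (ω : ℤ → 𝕏) : Fin n → 𝕏 := fun i => ω (1 + (i : ℕ))

/-- The block `X_{-n+1}^n` of a two-sided sequence. -/
def blockBoth (n : ℕ) (ω : ℤ → 𝕏) : Fin (2 * n) → 𝕏 := fun i => ω (-(n : ℤ) + 1 + (i : ℕ))

/-- A code assigns nonnegative values to finite strings. -/
def CodeNonneg (P : (n : ℕ) → (Fin n → 𝕏) → ℝ) : Prop := ∀ n x, 0 ≤ P n x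

/-- A code satisfies the Kraft inequality `∑_{x_1^n} P(x_1^n) ≤ 1`. -/
def CodeKraft (P : (n : ℕ) → (Fin n → 𝕏) → ℝ) : Prop :=
  ∀ n, 1 ≤ n → ∑' x : Fin n → 𝕏, P n x ≤ 1

/-- The pointwise mutual information
`I^P(n) = -log P(X_{-n+1}^0) - log P(X_1^n) + log P(X_{-n+1}^n)` (binary logarithm). -/
def pmi (P : (n : ℕ) → (Fin n → 𝕏) → ℝ) (n : ℕ) (ω : ℤ → 𝕏) : ℝ :=
  -Real.logb 2 (P n (blockNeg n ω)) - Real.logb 2 (P n (blockPos n ω))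
    + Real.logb 2 (P (2 * n) (blockBoth n ω))

/-- The upper random Hilberg exponent `γ⁺_P = limsup_n log⁺ I^P(n) / log n`. -/
def gammaPlus (P : (n : ℕ) → (Fin n → 𝕏) → ℝ) (ω : ℤ → 𝕏) : ℝ :=
  limsup (fun n : ℕ => logPlus (pmi P n ω) / Real.logb 2 n) atTop

/-- The lower random Hilberg exponent `γ⁻_P = liminf_n log⁺ I^P(n) / log n`. -/
def gammaMinus (P : (n : ℕ) → (Fin n → 𝕏) → ℝ) (ω : ℤ → 𝕏) : ℝ :=
  liminf (fun n : ℕ => logPlus (pmi P n ω) / Real.logb 2 n) atTop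

variable [MeasurableSpace 𝕏]

/-- The upper expected Hilberg exponent `δ⁺_P = limsup_n log⁺ E_Q I^P(n) / log n`. -/
def deltaPlus (Q : Measure (ℤ → 𝕏)) (P : (n : ℕ) → (Fin n → 𝕏) → ℝ) : ℝ :=
  limsup (fun n : ℕ => logPlus (∫ ω, pmi P n ω ∂Q) / Real.logb 2 n) atTop

/-- The lower expected Hilberg exponent `δ⁻_P = liminf_n log⁺ E_Q I^P(n) / log n`. -/
def deltaMinus (Q : Measure (ℤ → 𝕏)) (P : (n : ℕ) → (Fin n → 𝕏) → ℝ) : ℝ :=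
  liminf (fun n : ℕ => logPlus (∫ ω, pmi P n ω ∂Q) / Real.logb 2 n) atTop

/-- The measure `Q` regarded as a code: `Q(x_1^n) = Q(X_1^n = x_1^n)`. -/
def measureCode (Q : Measure (ℤ → 𝕏)) : (n : ℕ) → (Fin n → 𝕏) → ℝ :=
  fun n x => (Q {ω | blockPos n ω = x}).toReal

/-- The upper inverse expected Hilberg exponent
`ζ⁺_P = limsup_n log⁺ [E_Q (I^P(n)+B)⁻¹]⁻¹ / log n`, for a constant `B`. -/
def zetaPlus (Q : Measure (ℤ → 𝕏)) (P : (n : ℕ) → (Fin n → 𝕏) → ℝ) (B : ℝ) : ℝ :=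
  limsup (fun n : ℕ => logPlus ((∫ ω, (pmi P n ω + B)⁻¹ ∂Q)⁻¹) / Real.logb 2 n) atTop

/-- The lower inverse expected Hilberg exponent
`ζ⁻_P = liminf_n log⁺ [E_Q (I^P(n)+B)⁻¹]⁻¹ / log n`, for a constant `B`. -/
def zetaMinus (Q : Measure (ℤ → 𝕏)) (P : (n : ℕ) → (Fin n → 𝕏) → ℝ) (B : ℝ) : ℝ :=
  liminf (fun n : ℕ => logPlus ((∫ ω, (pmi P n ω + B)⁻¹ ∂Q)⁻¹) / Real.logb 2 n) atTop

/-- The parameter `ε_P = limsup_n log⁺ [Var_Q I^P(n) / E_Q I^P(n)] / log n`. -/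
def epsilonExp (Q : Measure (ℤ → 𝕏)) (P : (n : ℕ) → (Fin n → 𝕏) → ℝ) : ℝ :=
  limsup (fun n : ℕ =>
    logPlus (variance (pmi P n) Q / ∫ ω, pmi P n ω ∂Q) / Real.logb 2 n) atTop

/-- `I^P` is nearly nondecreasing: for some `C ≥ 0`,
`I^P(n+m) ≥ I^P(n) - 4 log m - C` pointwise for all `n, m ≥ 1`. -/
def NearlyNondecreasing (P : (n : ℕ) → (Fin n → 𝕏) → ℝ) : Prop :=
  ∃ C : ℝ, 0 ≤ C ∧ ∀ n m : ℕ, 1 ≤ n → 1 ≤ m → ∀ ω : ℤ → 𝕏,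
    pmi P n ω - 4 * Real.logb 2 m - C ≤ pmi P (n + m) ω


/-- The mixture Bernoulli specification: `Q(X_1^n = x_1^n) = (n+1)⁻¹ binom(n, Σ x_i)⁻¹`. -/
def IsMixtureBernoulli (Q : Measure (ℤ → Bool)) : Prop :=
  ∀ n : ℕ, 1 ≤ n → ∀ x : Fin n → Bool,
    Q {ω | blockPos n ω = x} =
      ENNReal.ofReal
        (((n : ℝ) + 1)⁻¹ *
          ((n.choose ((Finset.univ.filter fun i : Fin n => x i = true).card) : ℝ))⁻¹)


lemma logPlus_nonneg (x : ℝ) : 0 ≤ logPlus x := by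
  unfold logPlus
  split
  · exact Real.logb_nonneg one_lt_two (by linarith)
  · exact le_refl 0

lemma logPlus_mono {x y : ℝ} (h : x ≤ y) : logPlus x ≤ logPlus y := by
  unfold logPlus
  rcases le_or_gt 0 x with hx | hx
  · rw [if_pos hx, if_pos (hx.trans h)]
    exact Real.logb_le_logb_of_le one_lt_two (by linarith) (by linarith)
  · rw [if_neg (not_le.mpr hx)]
    rcases le_or_gt 0 y with hy | hy
    · rw [if_pos hy]; exact Real.logb_nonneg one_lt_two (by linarith)
    · rw [if_neg (not_le.mpr hy)]

lemma choose_mul_choose_le (n k₁ k₂ : ℕ) :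
    n.choose k₁ * n.choose k₂ ≤ (2 * n).choose (k₁ + k₂) := by
  rw [two_mul, Nat.add_choose_eq]
  exact Finset.single_le_sum (f := fun ij : ℕ × ℕ => n.choose ij.1 * n.choose ij.2)
    (fun i _ => Nat.zero_le _) (Finset.HasAntidiagonal.mem_antidiagonal.mpr (rfl : (k₁, k₂).1 + (k₁, k₂).2 = k₁ + k₂))

lemma card_blockBoth (n : ℕ) (ω : ℤ → Bool) :
    (Finset.univ.filter fun i : Fin (2 * n) => blockBoth n ω i = true).card
      = (Finset.univ.filter fun i : Fin n => blockNeg n ω i = true).card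
        + (Finset.univ.filter fun i : Fin n => blockPos n ω i = true).card := by
  simp only [Finset.card_filter]
  calc (∑ i : Fin (2 * n), if blockBoth n ω i = true then 1 else 0)
      = ∑ i : Fin (n + n), if ω (-(n : ℤ) + 1 + ((i : ℕ) : ℤ)) = true then 1 else 0 := by
        refine Fintype.sum_equiv (finCongr (two_mul n)) _ _ (fun i => ?_)
        simp [blockBoth]
        rfl
    _ = _ := by
        rw [Fin.sum_univ_add]
        congr 1
        · refine Finset.sum_congr rfl fun i _ => ?_
          have harg : -(n : ℤ) + 1 + (((Fin.natAdd n i : Fin (n + n)) : ℕ) : ℤ)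
              = 1 + ((i : ℕ) : ℤ) := by
            have h2 : ((Fin.natAdd n i : Fin (n + n)) : ℕ) = n + (i : ℕ) := rfl
            rw [h2]; push_cast; ring
          rw [harg]; rfl

lemma measureCode_eq (Q : Measure (ℤ → Bool)) (hQ : IsMixtureBernoulli Q)
    {n : ℕ} (hn : 1 ≤ n) (x : Fin n → Bool) :
    measureCode Q n x =
      ((n : ℝ) + 1)⁻¹ *
        ((n.choose ((Finset.univ.filter fun i : Fin n => x i = true).card) : ℝ))⁻¹ := by
  unfold measureCode
  rw [hQ n hn x, ENNReal.toReal_ofReal]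
  positivity

lemma pmi_le (Q : Measure (ℤ → Bool)) (hQ : IsMixtureBernoulli Q)
    {n : ℕ} (hn : 1 ≤ n) (ω : ℤ → Bool) :
    pmi (measureCode Q) n ω ≤ Real.logb 2 ((n : ℝ) + 1) := by
  set k₁ := (Finset.univ.filter fun i : Fin n => blockNeg n ω i = true).card with hk₁
  set k₂ := (Finset.univ.filter fun i : Fin n => blockPos n ω i = true).card with hk₂
  have hk : (Finset.univ.filter fun i : Fin (2 * n) => blockBoth n ω i = true).card = k₁ + k₂ :=
    card_blockBoth n ω
  have h1 : measureCode Q n (blockNeg n ω) = ((n : ℝ) + 1)⁻¹ * ((n.choose k₁ : ℝ))⁻¹ :=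
    measureCode_eq Q hQ hn _
  have h2 : measureCode Q n (blockPos n ω) = ((n : ℝ) + 1)⁻¹ * ((n.choose k₂ : ℝ))⁻¹ :=
    measureCode_eq Q hQ hn _
  have h3 : measureCode Q (2 * n) (blockBoth n ω)
      = (2 * (n : ℝ) + 1)⁻¹ * (((2 * n).choose (k₁ + k₂) : ℝ))⁻¹ := by
    rw [measureCode_eq Q hQ (by omega) (blockBoth n ω), hk]
    push_cast; ring_nf
  have hkn1 : k₁ ≤ n := le_trans (Finset.card_filter_le _ _) (by simp)
  have hkn2 : k₂ ≤ n := le_trans (Finset.card_filter_le _ _) (by simp)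
  have hc1 : (0 : ℝ) < (n.choose k₁ : ℝ) := by exact_mod_cast Nat.choose_pos hkn1
  have hc2 : (0 : ℝ) < (n.choose k₂ : ℝ) := by exact_mod_cast Nat.choose_pos hkn2
  have hc : (0 : ℝ) < (((2 * n).choose (k₁ + k₂) : ℕ) : ℝ) := by
    exact_mod_cast Nat.choose_pos (by omega)
  have hA : (0 : ℝ) < (n : ℝ) + 1 := by positivity
  have hB : (0 : ℝ) < 2 * (n : ℝ) + 1 := by positivity
  unfold pmi
  rw [h1, h2, h3]
  rw [Real.logb_mul (by positivity) (by positivity),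
      Real.logb_mul (by positivity) (by positivity),
      Real.logb_mul (by positivity) (by positivity)]
  simp only [Real.logb_inv]
  have key1 : Real.logb 2 ((n.choose k₁ : ℝ)) + Real.logb 2 ((n.choose k₂ : ℝ))
      ≤ Real.logb 2 ((((2 * n).choose (k₁ + k₂) : ℕ) : ℝ)) := by
    rw [← Real.logb_mul (ne_of_gt hc1) (ne_of_gt hc2)]
    refine Real.logb_le_logb_of_le one_lt_two (by positivity) ?_
    exact_mod_cast choose_mul_choose_le n k₁ k₂
  have key2 : Real.logb 2 ((n : ℝ) + 1) ≤ Real.logb 2 (2 * (n : ℝ) + 1) :=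
    Real.logb_le_logb_of_le one_lt_two hA (by linarith)
  linarith

lemma tendsto_aux :
    Filter.Tendsto (fun n : ℕ => logPlus (Real.logb 2 ((n : ℝ) + 1)) / Real.logb 2 n)
      Filter.atTop (nhds 0) := by
  set g : ℕ → ℝ := fun n => Real.log ((n : ℝ) + 1) / Real.log 2 + 1 with hg
  have hgeq : ∀ n : ℕ, logPlus (Real.logb 2 ((n : ℝ) + 1)) / Real.logb 2 n
      = Real.log (g n) / Real.log n := by
    intro n
    have hnn : (0 : ℝ) ≤ Real.logb 2 ((n : ℝ) + 1) :=
      Real.logb_nonneg one_lt_two (by exact_mod_cast le_add_of_nonneg_left n.cast_nonneg)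
    unfold logPlus
    rw [if_pos hnn]
    show Real.logb 2 (Real.logb 2 ((n : ℝ) + 1) + 1) / Real.logb 2 n = _
    have : Real.logb 2 ((n : ℝ) + 1) + 1 = g n := rfl
    rw [this]
    unfold Real.logb
    rw [div_div_div_cancel_right₀]
    exact Real.log_ne_zero_of_pos_of_ne_one (by norm_num) (by norm_num)
  simp only [hgeq]
  -- g tends to atTop
  have hgt : Filter.Tendsto g Filter.atTop Filter.atTop := by
    apply Filter.tendsto_atTop_add_const_right
    apply Filter.Tendsto.atTop_div_const (Real.log_pos (by norm_num))
    exact Real.tendsto_log_atTop.comp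
      (Filter.tendsto_atTop_add_const_right _ 1 tendsto_natCast_atTop_atTop)
  have h0 : Filter.Tendsto (fun n : ℕ => Real.log (g n) / g n) Filter.atTop (nhds 0) := by
    have := Real.isLittleO_log_id_atTop.tendsto_div_nhds_zero
    exact (this.comp hgt)
  have hlim : Filter.Tendsto (fun n : ℕ => (3 / Real.log 2) * (Real.log (g n) / g n))
      Filter.atTop (nhds 0) := by
    simpa using h0.const_mul (3 / Real.log 2)
  refine squeeze_zero' ?_ ?_ hlim
  · filter_upwards [Filter.eventually_ge_atTop 2] with n hn
    have hln : 0 < Real.log n := Real.log_pos (by exact_mod_cast hn)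
    have hg1 : (1 : ℝ) ≤ g n := by
      have h0 : 0 ≤ Real.log ((n : ℝ) + 1) / Real.log 2 :=
        div_nonneg (Real.log_nonneg (by exact_mod_cast le_add_of_nonneg_left n.cast_nonneg))
          (Real.log_nonneg one_le_two)
      simp only [hg]; linarith
    exact div_nonneg (Real.log_nonneg hg1) hln.le
  · filter_upwards [Filter.eventually_ge_atTop 2] with n hn
    have hn2 : (2 : ℝ) ≤ (n : ℝ) := by exact_mod_cast hn
    have hln : 0 < Real.log n := Real.log_pos (by linarith)
    have hl2 : 0 < Real.log 2 := Real.log_pos (by norm_num)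
    have hg1 : (1 : ℝ) ≤ g n := by
      have h0 : 0 ≤ Real.log ((n : ℝ) + 1) / Real.log 2 :=
        div_nonneg (Real.log_nonneg (by exact_mod_cast le_add_of_nonneg_left n.cast_nonneg))
          (Real.log_nonneg one_le_two)
      simp only [hg]; linarith
    have hgpos : 0 < g n := lt_of_lt_of_le zero_lt_one hg1
    have hlg : 0 ≤ Real.log (g n) := Real.log_nonneg hg1
    -- g n * log 2 ≤ 3 * log n
    have hbound : g n * Real.log 2 ≤ 3 * Real.log n := by
      have h1 : Real.log ((n : ℝ) + 1) ≤ 2 * Real.log n := by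
        have : (n : ℝ) + 1 ≤ (n : ℝ) ^ 2 := by nlinarith
        calc Real.log ((n : ℝ) + 1) ≤ Real.log ((n : ℝ) ^ 2) :=
              Real.log_le_log (by positivity) this
          _ = 2 * Real.log n := by rw [Real.log_pow]; push_cast; ring
      have h2 : Real.log 2 ≤ Real.log n := Real.log_le_log (by norm_num) hn2
      have : g n * Real.log 2 = Real.log ((n : ℝ) + 1) + Real.log 2 := by
        simp only [hg]; field_simp
      rw [this]; linarith
    have hkey : (Real.log n)⁻¹ ≤ 3 / (Real.log 2 * g n) := by
      rw [inv_eq_one_div, div_le_div_iff₀ hln (by positivity)]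
      nlinarith
    calc Real.log (g n) / Real.log n = Real.log (g n) * (Real.log n)⁻¹ := by
          rw [div_eq_mul_inv]
      _ ≤ Real.log (g n) * (3 / (Real.log 2 * g n)) := by
          exact mul_le_mul_of_nonneg_left hkey hlg
      _ = 3 / Real.log 2 * (Real.log (g n) / g n) := by
          field_simp

lemma tendsto_main (Q : Measure (ℤ → Bool)) (hQ : IsMixtureBernoulli Q) (ω : ℤ → Bool) :
    Filter.Tendsto (fun n : ℕ => logPlus (pmi (measureCode Q) n ω) / Real.logb 2 n)
      Filter.atTop (nhds 0) := by
  refine squeeze_zero' ?_ ?_ tendsto_aux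
  · filter_upwards [Filter.eventually_ge_atTop 2] with n hn
    have hln : 0 < Real.logb 2 (n : ℝ) :=
      Real.logb_pos one_lt_two (by exact_mod_cast hn)
    exact div_nonneg (logPlus_nonneg _) hln.le
  · filter_upwards [Filter.eventually_ge_atTop 2] with n hn
    have hln : 0 < Real.logb 2 (n : ℝ) :=
      Real.logb_pos one_lt_two (by exact_mod_cast hn)
    exact (div_le_div_iff_of_pos_right hln).mpr (logPlus_mono (pmi_le Q hQ (by omega) ω))


/-- For the mixture Bernoulli process `Q`, the random Hilberg exponents
satisfy `γ⁺_Q = γ⁻_Q = 0` `Q`-almost surely. -/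
theorem mixtureBernoulli_random_exponents (Q : Measure (ℤ → Bool))
    [IsProbabilityMeasure Q] (hstat : MeasurePreserving shift Q Q)
    (hQ : IsMixtureBernoulli Q) :
    ∀ᵐ ω ∂Q, gammaPlus (measureCode Q) ω = 0 ∧ gammaMinus (measureCode Q) ω = 0 := by
  refine Filter.Eventually.of_forall fun ω => ?_
  have h := tendsto_main Q hQ ω
  exact ⟨h.limsup_eq, h.liminf_eq⟩
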